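/- Let H be a k×n matrix with entries in {±1} whose rows are pairwise orthogonal (so H * Hᵀ = n • I_k). Then the sum over all k×k submatrices A of H of det(A)² equals n^k; consequently, since each such determinant squared is at most k^k, the number of k×k submatrices of H with nonzero determinant is at least (n/k)^k. -/

import Mathlib

open Matrix Finset

lemma step1 {k n : ℕ} (A : Matrix (Fin k) (Fin n) ℝ) (B : Matrix (Fin n) (Fin k) ℝ) :
    (A * B).det = ∑ φ : Fin k → Fin n, (∏ i, A i (φ i)) * (B.submatrix φ id).det := by
  have h1 : A * B = Matrix.of (fun i => ∑ r : Fin n, A i r • B r) := by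
    ext i j; simp [Matrix.mul_apply]
  rw [h1]
  have : (Matrix.of (fun i => ∑ r : Fin n, A i r • B r)).det
      = (Matrix.detRowAlternating : ((Fin k → ℝ) [⋀^Fin k]→ₗ[ℝ] ℝ)).toMultilinearMap
        (fun i => ∑ r : Fin n, A i r • B r) := rfl
  rw [this, MultilinearMap.map_sum]
  refine Finset.sum_congr rfl fun φ _ => ?_
  have := (Matrix.detRowAlternating :
      ((Fin k → ℝ) [⋀^Fin k]→ₗ[ℝ] ℝ)).toMultilinearMap.map_smul_univ
      (fun i => A i (φ i)) (fun i => B (φ i))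
  rw [this]
  rw [smul_eq_mul]
  congr 1

lemma cauchy_binet {k n : ℕ} (A : Matrix (Fin k) (Fin n) ℝ) (B : Matrix (Fin n) (Fin k) ℝ) :
    (A * B).det = ∑ s : {s : Finset (Fin n) // s.card = k},
      (A.submatrix id (fun j : Fin k => (s.1.orderIsoOfFin s.2 j : Fin n))).det *
      (B.submatrix (fun j : Fin k => (s.1.orderIsoOfFin s.2 j : Fin n)) id).det := by
  classical
  rw [step1]
  rw [← Finset.sum_filter_add_sum_filter_not Finset.univ (fun φ : Fin k → Fin n => Function.Injective φ)]
  have hzero : ∑ φ ∈ Finset.univ.filter (fun φ : Fin k → Fin n => ¬ Function.Injective φ),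
      (∏ i, A i (φ i)) * (B.submatrix φ id).det = 0 := by
    apply Finset.sum_eq_zero
    intro φ hφ
    rw [Finset.mem_filter] at hφ
    simp only [Function.Injective] at hφ
    push_neg at hφ
    obtain ⟨a, b, hab, hne⟩ := hφ.2
    have : (B.submatrix φ id).det = 0 :=
      Matrix.det_zero_of_row_eq hne (by ext j; simp [hab])
    rw [this, mul_zero]
  rw [hzero, add_zero]
  -- rewrite RHS per s as a sum over permutations
  have hs : ∀ s : {s : Finset (Fin n) // s.card = k},
      (A.submatrix id (fun j : Fin k => (s.1.orderIsoOfFin s.2 j : Fin n))).det *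
      (B.submatrix (fun j : Fin k => (s.1.orderIsoOfFin s.2 j : Fin n)) id).det
      = ∑ σ : Equiv.Perm (Fin k),
          (∏ i, A i ((s.1.orderIsoOfFin s.2 (σ i) : Fin n))) *
          (B.submatrix (fun i => (s.1.orderIsoOfFin s.2 (σ i) : Fin n)) id).det := by
    intro s
    set e : Fin k → Fin n := fun j => (s.1.orderIsoOfFin s.2 j : Fin n) with he
    have hperm : ∀ σ : Equiv.Perm (Fin k),
        (B.submatrix (fun i => e (σ i)) id).det
          = (Equiv.Perm.sign σ : ℝ) * (B.submatrix e id).det := by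
      intro σ
      have : (B.submatrix (fun i => e (σ i)) id) = (B.submatrix e id).submatrix σ id := by
        ext i j; simp
      rw [this, Matrix.det_permute]
    simp +zetaDelta only [hperm]
    have : ∑ σ : Equiv.Perm (Fin k),
        (∏ i, A i (e (σ i))) * ((Equiv.Perm.sign σ : ℝ) * (B.submatrix e id).det)
        = (∑ σ : Equiv.Perm (Fin k), (Equiv.Perm.sign σ : ℝ) * ∏ i, (A.submatrix id e).transpose (σ i) i)
            * (B.submatrix e id).det := by
      rw [Finset.sum_mul]
      refine Finset.sum_congr rfl fun σ _ => ?_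
      simp [Matrix.transpose_apply, Matrix.submatrix_apply]
      ring
    rw [this, ← Matrix.det_apply', Matrix.det_transpose]
  simp only [hs]
  rw [← Fintype.sum_prod_type (f := fun (p : {s : Finset (Fin n) // s.card = k} × Equiv.Perm (Fin k)) =>
    (∏ i, A i ((p.1.1.orderIsoOfFin p.1.2 (p.2 i) : Fin n))) *
    (B.submatrix (fun i => (p.1.1.orderIsoOfFin p.1.2 (p.2 i) : Fin n)) id).det)]
  -- bijection between pairs (s, σ) and injective functions
  refine (Finset.sum_bij (fun p _ => fun i => ((p.1 : {s : Finset (Fin n) // s.card = k}).1.orderIsoOfFin p.1.2 (p.2 i) : Fin n)) ?_ ?_ ?_ ?_).symm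
  · intro p _
    simp only [Finset.mem_filter, Finset.mem_univ, true_and]
    intro a b hab
    exact p.2.injective (by
      have := Subtype.coe_injective hab
      exact (p.1.1.orderIsoOfFin p.1.2).injective (Subtype.coe_injective hab))
  · intro p _ q _ h
    have himg : p.1.1 = q.1.1 := by
      have hp : Finset.image (fun i => ((p.1.1.orderIsoOfFin p.1.2 (p.2 i) : Fin n))) Finset.univ = p.1.1 := by
        apply Finset.eq_of_subset_of_card_le
        · intro x hx
          simp only [Finset.mem_image] at hx
          obtain ⟨i, _, rfl⟩ := hx
          exact (p.1.1.orderIsoOfFin p.1.2 (p.2 i)).2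
        · rw [p.1.2, Finset.card_image_of_injective _
            (fun a b hab => p.2.injective ((p.1.1.orderIsoOfFin p.1.2).injective (Subtype.coe_injective hab)))]
          simp
      have hq : Finset.image (fun i => ((q.1.1.orderIsoOfFin q.1.2 (q.2 i) : Fin n))) Finset.univ = q.1.1 := by
        apply Finset.eq_of_subset_of_card_le
        · intro x hx
          simp only [Finset.mem_image] at hx
          obtain ⟨i, _, rfl⟩ := hx
          exact (q.1.1.orderIsoOfFin q.1.2 (q.2 i)).2
        · rw [q.1.2, Finset.card_image_of_injective _
            (fun a b hab => q.2.injective ((q.1.1.orderIsoOfFin q.1.2).injective (Subtype.coe_injective hab)))]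
          simp
      beta_reduce at h
      rw [← hp, ← hq, h]
    have hsub : p.1 = q.1 := Subtype.ext himg
    obtain ⟨ps, pσ⟩ := p
    obtain ⟨qs, qσ⟩ := q
    cases hsub
    simp only [Prod.mk.injEq, true_and]
    beta_reduce at h
    ext i
    exact congrArg Fin.val ((ps.1.orderIsoOfFin ps.2).injective (Subtype.coe_injective (congrFun h i)))
  · intro φ hφ
    simp only [Finset.mem_filter, Finset.mem_univ, true_and] at hφ
    set s : Finset (Fin n) := Finset.image φ Finset.univ with hsdef
    have hcard : s.card = k := by
      rw [hsdef, Finset.card_image_of_injective _ hφ, Finset.card_univ, Fintype.card_fin]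
    set e := s.orderIsoOfFin hcard with hedef
    have hmem : ∀ i, φ i ∈ s := fun i => Finset.mem_image_of_mem φ (Finset.mem_univ i)
    set τ : Fin k → Fin k := fun i => e.symm ⟨φ i, hmem i⟩ with hτ
    have hτinj : Function.Injective τ := by
      intro a b hab
      have := congrArg (fun x => (e x : Fin n)) hab
      simp only [hτ, OrderIso.apply_symm_apply] at this
      exact hφ this
    have hτbij : Function.Bijective τ := Finite.injective_iff_bijective.mp hτinj
    refine ⟨⟨⟨s, hcard⟩, Equiv.ofBijective τ hτbij⟩, Finset.mem_univ _, ?_⟩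
    funext i
    show ((e (τ i) : Fin n)) = φ i
    simp [hτ]
  · intro p _
    rfl

lemma det_sq_le {k : ℕ} (A : Matrix (Fin k) (Fin k) ℝ)
    (h : ∀ i j, A i j = 1 ∨ A i j = -1) : A.det ^ 2 ≤ (k : ℝ) ^ k := by
  classical
  rcases Nat.eq_zero_or_pos k with hk | hk
  · subst hk
    simp [Matrix.det_fin_zero]
  set M := A * A.conjTranspose with hM
  have hPSD : M.PosSemidef := Matrix.posSemidef_self_mul_conjTranspose A
  have hHerm : M.IsHermitian := hPSD.1
  have hdet : M.det = A.det ^ 2 := by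
    rw [hM, Matrix.det_mul, Matrix.det_conjTranspose, sq]
    simp
  -- eigenvalues
  set lam := hHerm.eigenvalues with hlam
  have hnn : ∀ i, 0 ≤ lam i := fun i => hPSD.eigenvalues_nonneg i
  have hprod : ∏ i, lam i = A.det ^ 2 := by
    have := hHerm.det_eq_prod_eigenvalues
    rw [hdet] at this
    exact_mod_cast this.symm
  -- trace
  have htr : ∑ i, lam i = (k : ℝ) * k := by
    have h1 : M.trace = ∑ i, lam i := by
      have hspec := hHerm.spectral_theorem
      set V : Matrix (Fin k) (Fin k) ℝ := (hHerm.eigenvectorUnitary : Matrix (Fin k) (Fin k) ℝ)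
      have hV : star V * V = 1 := (Matrix.mem_unitaryGroup_iff').mp hHerm.eigenvectorUnitary.2
      calc M.trace = (V * Matrix.diagonal (RCLike.ofReal ∘ lam) * star V).trace := by
            conv_lhs => rw [hspec, Unitary.conjStarAlgAut_apply]
        _ = (star V * (V * Matrix.diagonal (RCLike.ofReal ∘ lam))).trace := by
              rw [Matrix.trace_mul_comm]
        _ = (Matrix.diagonal (RCLike.ofReal ∘ lam)).trace := by rw [← Matrix.mul_assoc, hV, Matrix.one_mul]
        _ = ∑ i, lam i := by simp [Matrix.trace, Matrix.diag]
    have h2 : M.trace = (k : ℝ) * k := by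
      have : ∀ i, M i i = (k : ℝ) := by
        intro i
        rw [hM, Matrix.mul_apply]
        have : ∀ j, A i j * (A.conjTranspose) j i = 1 := by
          intro j
          rcases h i j with h1 | h1 <;> simp [Matrix.conjTranspose_apply, h1]
        rw [Finset.sum_congr rfl (fun j _ => this j)]
        simp
      simp [Matrix.trace, Matrix.diag, this, Finset.sum_const]
    rw [← h1, h2]
  -- AM-GM
  have hkR : (0:ℝ) < k := by exact_mod_cast hk
  have hamgm := Real.geom_mean_le_arith_mean_weighted Finset.univ
    (fun _ => 1 / (k:ℝ)) lam (fun _ _ => by positivity)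
    (by simp [Finset.sum_const]; field_simp) (fun i _ => hnn i)
  have hP : (∏ i, lam i) ^ ((1:ℝ)/k) ≤ (k : ℝ) := by
    rw [← Real.finset_prod_rpow Finset.univ lam (fun i _ => hnn i)]
    calc ∏ i, lam i ^ ((1:ℝ)/k) ≤ ∑ i, (1/(k:ℝ)) * lam i := hamgm
      _ = (1/(k:ℝ)) * ∑ i, lam i := by rw [Finset.mul_sum]
      _ = (k:ℝ) := by rw [htr]; field_simp
  have hPnn : (0:ℝ) ≤ ∏ i, lam i := Finset.prod_nonneg (fun i _ => hnn i)
  have key : (∏ i, lam i) ≤ (k:ℝ) ^ (k:ℕ) := by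
    have h3 : ((∏ i, lam i) ^ ((1:ℝ)/k)) ^ (k:ℝ) ≤ (k:ℝ) ^ (k:ℝ) :=
      Real.rpow_le_rpow (Real.rpow_nonneg hPnn _) hP (le_of_lt hkR)
    rw [← Real.rpow_natCast ((k:ℝ)) k] at *
    rw [← Real.rpow_mul hPnn] at h3
    rw [one_div, inv_mul_cancel₀ (ne_of_gt hkR), Real.rpow_one] at h3
    exact h3
  rw [← hprod]
  exact key

theorem stmt_4 (k n : ℕ) (hkn : k ≤ n) (H : Matrix (Fin k) (Fin n) ℝ)
    (hent : ∀ i j, H i j = 1 ∨ H i j = -1)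
    (horth : H * H.transpose = (n : ℝ) • 1) :
    (∑ s : {s : Finset (Fin n) // s.card = k},
        ((H.submatrix id (fun j : Fin k => (s.1.orderIsoOfFin s.2 j : Fin n))).det) ^ 2
          = (n : ℝ) ^ k)
    ∧ ((n : ℝ) / k) ^ k ≤
        (Set.ncard {s : {s : Finset (Fin n) // s.card = k} |
          (H.submatrix id (fun j : Fin k => (s.1.orderIsoOfFin s.2 j : Fin n))).det ≠ 0} : ℝ) := by
  classical
  have hsum : ∑ s : {s : Finset (Fin n) // s.card = k},
      ((H.submatrix id (fun j : Fin k => (s.1.orderIsoOfFin s.2 j : Fin n))).det) ^ 2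
        = (n : ℝ) ^ k := by
    have hcb := cauchy_binet H H.transpose
    rw [horth] at hcb
    have hdet1 : ((n : ℝ) • (1 : Matrix (Fin k) (Fin k) ℝ)).det = (n : ℝ) ^ k := by
      rw [Matrix.det_smul, Matrix.det_one, mul_one]
      simp
    rw [hdet1] at hcb
    rw [hcb]
    refine Finset.sum_congr rfl fun s _ => ?_
    have : H.transpose.submatrix (fun j : Fin k => (s.1.orderIsoOfFin s.2 j : Fin n)) id
        = (H.submatrix id (fun j : Fin k => (s.1.orderIsoOfFin s.2 j : Fin n))).transpose := by
      ext i j; simp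
    rw [this, Matrix.det_transpose, sq]
  refine ⟨hsum, ?_⟩
  set D : {s : Finset (Fin n) // s.card = k} → ℝ := fun s =>
    ((H.submatrix id (fun j : Fin k => (s.1.orderIsoOfFin s.2 j : Fin n))).det) ^ 2 with hD
  have hbound : ∀ s, D s ≤ (k : ℝ) ^ k := by
    intro s
    apply det_sq_le
    intro i j
    exact hent i _
  have hkk : (0:ℝ) < (k : ℝ) ^ k := by
    rcases Nat.eq_zero_or_pos k with h | h
    · subst h; norm_num
    · have : (0:ℝ) < (k:ℝ) := by exact_mod_cast h
      positivity
  set S := {s : {s : Finset (Fin n) // s.card = k} |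
      (H.submatrix id (fun j : Fin k => (s.1.orderIsoOfFin s.2 j : Fin n))).det ≠ 0} with hS
  have hncard : (S.ncard : ℝ) = ((Finset.univ.filter (fun s : {s : Finset (Fin n) // s.card = k} =>
      (H.submatrix id (fun j : Fin k => (s.1.orderIsoOfFin s.2 j : Fin n))).det ≠ 0)).card : ℝ) := by
    rw [hS, Set.ncard_eq_toFinset_card']
    congr 1
    congr 1; ext s; rw [Set.mem_toFinset, Finset.mem_filter]; simp
  have hle : (n : ℝ) ^ k ≤ (S.ncard : ℝ) * (k : ℝ) ^ k := by
    rw [← hsum]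
    have h1 : ∑ s : {s : Finset (Fin n) // s.card = k}, D s
        = ∑ s ∈ Finset.univ.filter (fun s : {s : Finset (Fin n) // s.card = k} =>
            (H.submatrix id (fun j : Fin k => (s.1.orderIsoOfFin s.2 j : Fin n))).det ≠ 0), D s := by
      refine (Finset.sum_filter_of_ne ?_).symm
      intro s _ hDs
      intro hzero
      apply hDs
      show (H.submatrix id fun j : Fin k => ((s.1.orderIsoOfFin s.2) j : Fin n)).det ^ 2 = 0
      rw [hzero]; ring
    rw [show ∑ s : {s : Finset (Fin n) // s.card = k},
        ((H.submatrix id (fun j : Fin k => (s.1.orderIsoOfFin s.2 j : Fin n))).det) ^ 2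
        = ∑ s : {s : Finset (Fin n) // s.card = k}, D s from rfl, h1]
    calc _ ≤ (Finset.univ.filter (fun s : {s : Finset (Fin n) // s.card = k} =>
            (H.submatrix id (fun j : Fin k => (s.1.orderIsoOfFin s.2 j : Fin n))).det ≠ 0)).card
            • ((k:ℝ)^k) := Finset.sum_le_card_nsmul _ _ _ (fun s _ => hbound s)
      _ = (S.ncard : ℝ) * (k : ℝ) ^ k := by rw [nsmul_eq_mul, hncard]
  rw [div_pow, div_le_iff₀ hkk]
  exact_mod_cast hle
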